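/- Reduction of the fused lasso to an ordinary lasso: let D̃ be the augmented difference matrix with inverse [X₁ X₂], P₂ = X₂(X₂^⊤X₂)^{-1}X₂^⊤, ỹ = (I-P₂)y, X̃ = (I-P₂)X₁. Then μ̂ minimizes ½‖y-μ‖² + λ‖Dμ‖₁ over μ ∈ ℝ^n if and only if μ̂ = X₁φ̂ + X₂φ̂₂ where φ̂ minimizes ½‖ỹ - X̃φ‖² + λ‖φ‖₁ over φ ∈ ℝ^{n-1} and φ̂₂ = (X₂^⊤X₂)^{-1}X₂^⊤(y - X₁φ̂). -/
import Mathlib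


open Matrix Finset

lemma fin_sum_split {n : ℕ} (hn : 1 ≤ n) (F : Fin n → ℝ) :
    ∑ k, F k = (∑ j : Fin (n-1), F (Fin.castLE (Nat.sub_le n 1) j))
      + F ⟨n-1, by omega⟩ := by
  rw [← Finset.sum_erase_add _ _ (Finset.mem_univ (⟨n-1, by omega⟩ : Fin n))]
  congr 1
  refine (Finset.sum_bij' (fun (j : Fin (n-1)) _ => Fin.castLE (Nat.sub_le n 1) j)
    (fun (k : Fin n) hk => ⟨(k : ℕ), ?_⟩) ?_ ?_ ?_ ?_ ?_).symm
  · have hk' : k ≠ ⟨n-1, by omega⟩ := (Finset.mem_erase.mp hk).1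
    have : (k : ℕ) ≠ n - 1 := fun h => hk' (Fin.ext h)
    have := k.isLt; omega
  · intro j _
    refine Finset.mem_erase.mpr ⟨?_, Finset.mem_univ _⟩
    intro h
    have := congrArg Fin.val h
    simp at this
    have := j.isLt; omega
  · intro k hk; exact Finset.mem_univ _
  · intro j _; ext; simp
  · intro k _; ext; simp
  · intro j _; rfl

/-- Reduction of the 1D fused lasso to an ordinary lasso: `μ̂` minimizes
`½‖y-μ‖² + λ‖Dμ‖₁` iff `μ̂ = X₁ φ̂ + X₂ φ̂₂`, where `φ̂` minimizes the lasso
objective `½‖ỹ - X̃φ‖² + λ‖φ‖₁` and `φ̂₂ = (X₂ᵀX₂)⁻¹X₂ᵀ(y - X₁ φ̂)`. -/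
theorem fused_lasso_reduction (n : ℕ) (hn : 2 ≤ n)
    (Dtilde : Matrix (Fin n) (Fin n) ℝ)
    (hD : ∀ i j : Fin n, (i : ℕ) < n - 1 →
      Dtilde i j = if (j : ℕ) = (i : ℕ) then -1
        else if (j : ℕ) = (i : ℕ) + 1 then 1 else 0)
    (hones : ∀ i j : Fin n, (i : ℕ) = n - 1 → Dtilde i j = 1)
    (hinv : IsUnit Dtilde)
    (X₁ : Matrix (Fin n) (Fin (n - 1)) ℝ)
    (hX₁ : ∀ i k, X₁ i k = Dtilde⁻¹ i (Fin.castLE (Nat.sub_le n 1) k))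
    (X₂ : Matrix (Fin n) (Fin 1) ℝ)
    (hX₂ : ∀ i, X₂ i 0 = Dtilde⁻¹ i ⟨n - 1, by omega⟩)
    (P₂ : Matrix (Fin n) (Fin n) ℝ) (hP₂ : P₂ = X₂ * (X₂ᵀ * X₂)⁻¹ * X₂ᵀ)
    (y : Fin n → ℝ) (lam : ℝ) (hlam : 0 < lam)
    (ytil : Fin n → ℝ) (hytil : ytil = (1 - P₂).mulVec y)
    (Xtil : Matrix (Fin n) (Fin (n - 1)) ℝ) (hXtil : Xtil = (1 - P₂) * X₁)
    (f : (Fin n → ℝ) → ℝ)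
    (hf : f = fun μ => (1 / 2) * ∑ i, (y i - μ i) ^ 2
      + lam * ∑ j : Fin (n - 1),
          |μ ⟨(j : ℕ) + 1, by have := j.isLt; omega⟩
            - μ (Fin.castLE (Nat.sub_le n 1) j)|)
    (g : (Fin (n - 1) → ℝ) → ℝ)
    (hg : g = fun φ => (1 / 2) * ∑ i, (ytil i - Xtil.mulVec φ i) ^ 2
      + lam * ∑ j, |φ j|) :
    ∀ μhat : Fin n → ℝ,
      IsMinOn f Set.univ μhat ↔
      ∃ φhat : Fin (n - 1) → ℝ, IsMinOn g Set.univ φhat ∧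
        μhat = X₁.mulVec φhat
          + X₂.mulVec (((X₂ᵀ * X₂)⁻¹ * X₂ᵀ).mulVec (y - X₁.mulVec φhat)) := by
  have hdet : IsUnit Dtilde.det := (Matrix.isUnit_iff_isUnit_det _).mp hinv
  have hDD : Dtilde * Dtilde⁻¹ = 1 := Matrix.mul_nonsing_inv _ hdet
  have hDD' : Dtilde⁻¹ * Dtilde = 1 := Matrix.nonsing_inv_mul _ hdet
  set u : Fin n → ℝ := fun i => X₂ i 0 with hu
  set c : ℝ := ∑ i, u i ^ 2 with hcdef
  set s : (Fin n → ℝ) → ℝ := fun v => ∑ i, u i * v i with hs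
  -- sum of u is 1
  have husum : ∑ k, u k = 1 := by
    have h1 : ∑ k, u k = ∑ k, Dtilde (⟨n-1, by omega⟩ : Fin n) k * Dtilde⁻¹ k ⟨n-1, by omega⟩ := by
      refine Finset.sum_congr rfl fun k _ => ?_
      rw [hones _ _ rfl, one_mul]
      simp only [hu]
      exact hX₂ k
    rw [h1, ← Matrix.mul_apply, hDD, Matrix.one_apply_eq]
  have hcpos : 0 < c := by
    rcases (Finset.sum_nonneg fun i _ => sq_nonneg (u i)).lt_or_eq with h | h
    · exact h
    · exfalso
      have hz := (Finset.sum_eq_zero_iff_of_nonneg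
        (fun (i : Fin n) _ => sq_nonneg (u i))).mp h.symm
      have hzz : ∑ k, u k = 0 := Finset.sum_eq_zero fun k _ =>
        pow_eq_zero_iff (two_ne_zero) |>.mp (hz k (Finset.mem_univ k))
      rw [husum] at hzz
      norm_num at hzz
  have hXtXinv : (X₂ᵀ * X₂)⁻¹ = c⁻¹ • (1 : Matrix (Fin 1) (Fin 1) ℝ) := by
    have hXtX : X₂ᵀ * X₂ = c • (1 : Matrix (Fin 1) (Fin 1) ℝ) := by
      ext i j
      fin_cases i <;> fin_cases j
      simp [Matrix.mul_apply, hcdef, hu, sq]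
    apply Matrix.inv_eq_right_inv
    rw [hXtX, Matrix.smul_mul, Matrix.mul_smul, one_mul, smul_smul,
      mul_inv_cancel₀ hcpos.ne', one_smul]
  have hP2v : ∀ v : Fin n → ℝ, ∀ i, P₂.mulVec v i = c⁻¹ * s v * u i := by
    have hP2e : ∀ i j, P₂ i j = c⁻¹ * (u i * u j) := by
      intro i j
      rw [hP₂, hXtXinv]
      simp [Matrix.mul_apply, Fin.sum_univ_one, hu]
      ring
    intro v i
    simp only [Matrix.mulVec, dotProduct]
    simp_rw [hP2e]
    rw [hs]
    simp only []
    rw [Finset.mul_sum, Finset.sum_mul]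
    exact Finset.sum_congr rfl fun j _ => by ring
  -- residual formula
  have hresid : ∀ (φ : Fin (n-1) → ℝ) (i : Fin n),
      ytil i - Xtil.mulVec φ i
        = (y i - X₁.mulVec φ i) - (c⁻¹ * s (y - X₁.mulVec φ)) * u i := by
    have hslin : ∀ a b : Fin n → ℝ, s (a - b) = s a - s b := by
      intro a b
      rw [hs]
      simp [mul_sub, Finset.sum_sub_distrib]
    intro φ i
    rw [hytil, hXtil, ← Matrix.mulVec_mulVec]
    simp only [Matrix.sub_mulVec, Matrix.one_mulVec, Pi.sub_apply]
    rw [hP2v y i, hP2v (X₁.mulVec φ) i, hslin]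
    ring
  -- quadratic expansion
  have hexpand : ∀ (t : ℝ) (r : Fin n → ℝ),
      ∑ i, (r i - t * u i) ^ 2 = (∑ i, r i ^ 2) - 2 * t * s r + t ^ 2 * c := by
    intro t r
    have h1 : ∀ i : Fin n, (r i - t * u i) ^ 2
        = r i ^ 2 - 2 * t * (u i * r i) + t ^ 2 * u i ^ 2 := fun i => by ring
    simp_rw [h1]
    rw [Finset.sum_add_distrib, Finset.sum_sub_distrib, ← Finset.mul_sum, ← Finset.mul_sum]
  set α : (Fin (n-1) → ℝ) → ℝ := fun φ => c⁻¹ * s (y - X₁.mulVec φ) with hα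
  set θ : (Fin (n-1) → ℝ) → ℝ → (Fin n → ℝ) :=
    fun φ t k => if h : (k : ℕ) < n - 1 then φ ⟨k, h⟩ else t with hθ
  have L1 : ∀ (φ : Fin (n-1) → ℝ) (t : ℝ),
      Dtilde⁻¹.mulVec (θ φ t) = X₁.mulVec φ + t • u := by
    intro φ t
    ext i
    simp only [Matrix.mulVec, dotProduct]
    rw [fin_sum_split (by omega) (fun k => Dtilde⁻¹ i k * θ φ t k)]
    have hθ1 : ∀ (j : Fin (n-1)), θ φ t (Fin.castLE (Nat.sub_le n 1) j) = φ j := by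
      intro j
      simp only [hθ]
      rw [dif_pos (show ((Fin.castLE (Nat.sub_le n 1) j : Fin n) : ℕ) < n - 1 from j.isLt)]
      exact congrArg φ (Fin.ext (by simp))
    have hθ2 : θ φ t (⟨n-1, by omega⟩ : Fin n) = t := by
      simp [hθ]
    simp only [hθ1, hθ2, Pi.add_apply, Pi.smul_apply, smul_eq_mul]
    congr 1
    · refine Finset.sum_congr rfl fun j _ => ?_
      simp only [hX₁]
    · rw [hu]
      simp only []
      rw [hX₂ i, mul_comm]
  have L2 : ∀ μ : Fin n → ℝ,
      μ = X₁.mulVec (fun j => Dtilde.mulVec μ (Fin.castLE (Nat.sub_le n 1) j))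
        + (Dtilde.mulVec μ ⟨n-1, by omega⟩) • u := by
    intro μ
    have hθeq : θ (fun j => Dtilde.mulVec μ (Fin.castLE (Nat.sub_le n 1) j))
        (Dtilde.mulVec μ ⟨n-1, by omega⟩) = Dtilde.mulVec μ := by
      ext k
      simp only [hθ]
      by_cases h : (k : ℕ) < n - 1
      · rw [dif_pos h]
        exact congrArg (Dtilde.mulVec μ) (Fin.ext rfl)
      · have hk : (k : ℕ) = n - 1 := by have := k.isLt; omega
        rw [dif_neg h]
        congr 1
        exact (Fin.ext hk).symm
    have h2 := L1 (fun j => Dtilde.mulVec μ (Fin.castLE (Nat.sub_le n 1) j))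
      (Dtilde.mulVec μ ⟨n-1, by omega⟩)
    rw [hθeq] at h2
    rw [← h2, Matrix.mulVec_mulVec, hDD', Matrix.one_mulVec]
  have L3 : ∀ (φ : Fin (n-1) → ℝ) (t : ℝ) (j : Fin (n-1)),
      (X₁.mulVec φ + t • u) ⟨(j : ℕ) + 1, by have := j.isLt; omega⟩
        - (X₁.mulVec φ + t • u) (Fin.castLE (Nat.sub_le n 1) j) = φ j := by
    intro φ t j
    have hback : Dtilde.mulVec (X₁.mulVec φ + t • u) = θ φ t := by
      rw [← L1, Matrix.mulVec_mulVec, hDD, Matrix.one_mulVec]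
    have hrow : ∀ μ : Fin n → ℝ, Dtilde.mulVec μ (Fin.castLE (Nat.sub_le n 1) j)
        = μ ⟨(j : ℕ) + 1, by have := j.isLt; omega⟩ - μ (Fin.castLE (Nat.sub_le n 1) j) := by
      intro μ
      have hj : ((Fin.castLE (Nat.sub_le n 1) j : Fin n) : ℕ) < n - 1 := j.isLt
      simp only [Matrix.mulVec, dotProduct]
      have hterm : ∀ k : Fin n, Dtilde (Fin.castLE (Nat.sub_le n 1) j) k * μ k
          = (if k = (⟨(j : ℕ) + 1, by have := j.isLt; omega⟩ : Fin n) then μ k else 0)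
            + (if k = Fin.castLE (Nat.sub_le n 1) j then -μ k else 0) := by
        intro k
        rw [hD _ _ hj]
        simp only [Fin.ext_iff, Fin.coe_castLE]
        by_cases h1 : (k : ℕ) = (j : ℕ)
        · rw [if_pos h1, if_neg (by omega), if_pos h1]
          ring
        · rw [if_neg h1, if_neg h1]
          by_cases h2 : (k : ℕ) = (j : ℕ) + 1
          · rw [if_pos h2, if_pos h2]
            ring
          · rw [if_neg h2, if_neg h2]
            ring
      simp_rw [hterm]
      rw [Finset.sum_add_distrib, Finset.sum_ite_eq' Finset.univ, Finset.sum_ite_eq' Finset.univ]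
      simp only [Finset.mem_univ, if_true]
      ring
    rw [← hrow, hback]
    simp only [hθ]
    rw [dif_pos (show ((Fin.castLE (Nat.sub_le n 1) j : Fin n) : ℕ) < n - 1 from j.isLt)]
    exact congrArg φ (Fin.ext (by simp))
  have L4 : ∀ (φ : Fin (n-1) → ℝ) (t : ℝ),
      f (X₁.mulVec φ + t • u) = g φ + (1/2) * c * (t - α φ) ^ 2 := by
    intro φ t
    have hq1 : ∑ i, (y i - (X₁.mulVec φ + t • u) i) ^ 2
        = (∑ i, (y - X₁.mulVec φ) i ^ 2) - 2 * t * s (y - X₁.mulVec φ) + t ^ 2 * c := by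
      rw [← hexpand t (y - X₁.mulVec φ)]
      refine Finset.sum_congr rfl fun i _ => ?_
      simp only [Pi.add_apply, Pi.sub_apply, Pi.smul_apply, smul_eq_mul]
      ring
    have hq2 : ∑ i, (ytil i - Xtil.mulVec φ i) ^ 2
        = (∑ i, (y - X₁.mulVec φ) i ^ 2) - 2 * (α φ) * s (y - X₁.mulVec φ)
          + (α φ) ^ 2 * c := by
      rw [← hexpand (α φ) (y - X₁.mulVec φ)]
      refine Finset.sum_congr rfl fun i _ => ?_
      rw [hresid φ i]
      simp only [Pi.sub_apply, hα]
    have hpen : ∀ j : Fin (n-1),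
        |(X₁.mulVec φ + t • u) ⟨(j : ℕ) + 1, by have := j.isLt; omega⟩
          - (X₁.mulVec φ + t • u) (Fin.castLE (Nat.sub_le n 1) j)| = |φ j| :=
      fun j => by rw [L3 φ t j]
    rw [hf, hg]
    simp only []
    rw [hq1, hq2, Finset.sum_congr rfl fun j _ => hpen j]
    have hsr : s (y - X₁.mulVec φ) = c * α φ := by
      rw [hα]
      simp only []
      rw [← mul_assoc, mul_inv_cancel₀ hcpos.ne', one_mul]
    rw [hsr]
    ring
  have L5 : ∀ w : Fin n → ℝ,
      X₂.mulVec (((X₂ᵀ * X₂)⁻¹ * X₂ᵀ).mulVec w) = (c⁻¹ * s w) • u := by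
    intro w
    have h0 : ((X₂ᵀ * X₂)⁻¹ * X₂ᵀ).mulVec w = fun _ => c⁻¹ * s w := by
      ext i0
      rw [hXtXinv]
      simp only [Matrix.mulVec, dotProduct, Matrix.mul_apply, Matrix.smul_apply,
        Matrix.one_apply, Fin.sum_univ_one, Matrix.transpose_apply, hs, hu]
      rw [Finset.mul_sum]
      refine Finset.sum_congr rfl fun j _ => ?_
      fin_cases i0
      simp
      ring
    rw [h0]
    ext i
    simp only [Matrix.mulVec, dotProduct, Fin.sum_univ_one, Pi.smul_apply,
      smul_eq_mul, hu]
    ring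
  intro μhat
  constructor
  · intro hmin
    set φh : Fin (n-1) → ℝ :=
      fun j => Dtilde.mulVec μhat (Fin.castLE (Nat.sub_le n 1) j) with hφh
    set th : ℝ := Dtilde.mulVec μhat ⟨n-1, by omega⟩ with hth
    have hrep : μhat = X₁.mulVec φh + th • u := L2 μhat
    have hminf : ∀ x : Fin n → ℝ, f μhat ≤ f x := fun x => hmin (Set.mem_univ x)
    have hfval : f μhat = g φh + (1/2) * c * (th - α φh) ^ 2 := by
      conv_lhs => rw [hrep]
      exact L4 _ _
    have hle : f μhat ≤ g φh := by
      have h1 := hminf (X₁.mulVec φh + (α φh) • u)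
      rw [L4] at h1
      simpa using h1
    have hth2 : th = α φh := by
      by_contra hne
      have h1 : 0 < (1/2) * c * (th - α φh) ^ 2 := by
        have := sub_ne_zero.mpr hne
        positivity
      linarith [hfval ▸ hle]
    refine ⟨φh, ?_, ?_⟩
    · intro x _
      have h2 := hminf (X₁.mulVec x + (α x) • u)
      rw [L4] at h2
      rw [hfval, hth2] at h2
      simp only [sub_self] at h2
      simpa using h2
    · rw [L5, hrep, hth2, hα]
  · rintro ⟨φh, hgmin, hrep⟩
    have hrep' : μhat = X₁.mulVec φh + (α φh) • u := by
      rw [hrep, L5, hα]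
    have hfval : f μhat = g φh := by
      rw [hrep', L4]
      simp
    intro x _
    have hx := L2 x
    set φx : Fin (n-1) → ℝ :=
      fun j => Dtilde.mulVec x (Fin.castLE (Nat.sub_le n 1) j) with hφx
    set tx : ℝ := Dtilde.mulVec x ⟨n-1, by omega⟩ with htx
    have h1 : f x = g φx + (1/2) * c * (tx - α φx) ^ 2 := by
      conv_lhs => rw [hx]
      exact L4 _ _
    have h2 : g φh ≤ g φx := hgmin (Set.mem_univ φx)
    have h3 : 0 ≤ (1/2) * c * (tx - α φx) ^ 2 := by positivity
    simp only [Set.mem_setOf_eq]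
    rw [hfval, h1]
    linarith
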